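/- Let G be a connected {P₆, S₁,₂,₂}-free graph with efficient dominating set D, v ∈ D, and distance levels Nᵢ. Then no connected component of G[N₃] contains two vertices of D, and consequently every connected component of G[N₃] contains a universal vertex (a vertex adjacent to all other vertices of that component). -/
import Mathlib

open SimpleGraph

/-- `D` is an efficient dominating set. -/
def IsEffDomSet {V : Type*} (G : SimpleGraph V) (D : Set V) : Prop :=
  ∀ u : V, ∃! d : V, d ∈ D ∧ (d = u ∨ G.Adj d u)

/-- `S₁,₂,₂`: a chordless path 0-1-2-3-4 plus a vertex 5 adjacent only to 2. -/
def S122 : SimpleGraph (Fin 6) :=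
  SimpleGraph.fromEdgeSet {s(0, 1), s(1, 2), s(2, 3), s(3, 4), s(2, 5)}

/-- The vertex set of the connected component of `u` in the subgraph of `G`
induced on `S` (empty if `u ∉ S`). -/
def compOf {V : Type*} (G : SimpleGraph V) (S : Set V) (u : V) : Set V :=
  {w | ∃ (hu : u ∈ S) (hw : w ∈ S), (G.induce S).Reachable ⟨u, hu⟩ ⟨w, hw⟩}

lemma S122_adj_iff (a b : Fin 6) : S122.Adj a b ↔
    (s(a,b) = s(0,1) ∨ s(a,b) = s(1,2) ∨ s(a,b) = s(2,3) ∨ s(a,b) = s(3,4) ∨ s(a,b) = s(2,5))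
      ∧ a ≠ b := by
  simp [S122, SimpleGraph.fromEdgeSet_adj, Set.mem_insert_iff, Set.mem_singleton_iff]

instance : DecidableRel S122.Adj := fun _ _ => decidable_of_iff _ (S122_adj_iff _ _).symm

instance : DecidableRel (SimpleGraph.pathGraph 6).Adj := fun _ _ =>
  decidable_of_iff _ (SimpleGraph.pathGraph_adj).symm

lemma embed_six {V : Type*} (H : SimpleGraph (Fin 6))
    {G : SimpleGraph V} (f : Fin 6 → V)
    (hne : ∀ i j : Fin 6, i < j → f i ≠ f j)
    (hiff : ∀ i j : Fin 6, i < j → (G.Adj (f i) (f j) ↔ H.Adj i j)) :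
    Nonempty (H ↪g G) := by
  have hinj : Function.Injective f := by
    intro i j h
    rcases lt_trichotomy i j with hlt | he | hlt
    · exact absurd h (hne i j hlt)
    · exact he
    · exact absurd h.symm (hne j i hlt)
  refine ⟨⟨⟨f, hinj⟩, ?_⟩⟩
  intro i j
  rcases lt_trichotomy i j with hlt | he | hlt
  · exact hiff i j hlt
  · subst he
    simp only [Function.Embedding.coeFn_mk]
    exact iff_of_false (G.irrefl) (H.irrefl)
  · simp only [Function.Embedding.coeFn_mk]
    constructor
    · intro h; exact ((hiff j i hlt).mp h.symm).symm
    · intro h; exact ((hiff j i hlt).mpr h.symm).symm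

lemma embedP6 {V : Type*} (G : SimpleGraph V) (x0 x1 x2 x3 x4 x5 : V)
    (e01 : G.Adj x0 x1) (e12 : G.Adj x1 x2) (e23 : G.Adj x2 x3)
    (e34 : G.Adj x3 x4) (e45 : G.Adj x4 x5)
    (n02 : ¬G.Adj x0 x2) (n03 : ¬G.Adj x0 x3) (n04 : ¬G.Adj x0 x4) (n05 : ¬G.Adj x0 x5)
    (n13 : ¬G.Adj x1 x3) (n14 : ¬G.Adj x1 x4) (n15 : ¬G.Adj x1 x5)
    (n24 : ¬G.Adj x2 x4) (n25 : ¬G.Adj x2 x5) (n35 : ¬G.Adj x3 x5) :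
    Nonempty (SimpleGraph.pathGraph 6 ↪g G) := by
  have ne01 : x0 ≠ x1 := e01.ne
  have ne12 : x1 ≠ x2 := e12.ne
  have ne23 : x2 ≠ x3 := e23.ne
  have ne34 : x3 ≠ x4 := e34.ne
  have ne45 : x4 ≠ x5 := e45.ne
  have ne02 : x0 ≠ x2 := by rintro rfl; exact n03 e23
  have ne03 : x0 ≠ x3 := by rintro rfl; exact n04 e34
  have ne04 : x0 ≠ x4 := by rintro rfl; exact n05 e45
  have ne05 : x0 ≠ x5 := by rintro rfl; exact n04 e45.symm
  have ne13 : x1 ≠ x3 := by rintro rfl; exact n14 e34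
  have ne14 : x1 ≠ x4 := by rintro rfl; exact n15 e45
  have ne15 : x1 ≠ x5 := by rintro rfl; exact n14 e45.symm
  have ne24 : x2 ≠ x4 := by rintro rfl; exact n25 e45
  have ne25 : x2 ≠ x5 := by rintro rfl; exact n24 e45.symm
  have ne35 : x3 ≠ x5 := by rintro rfl; exact n25 e23
  apply embed_six (SimpleGraph.pathGraph 6)
      (fun k : Fin 6 => match k with |0=>x0|1=>x1|2=>x2|3=>x3|4=>x4|5=>x5)
  · intro i j hij
    fin_cases i <;> fin_cases j <;>
      first
        | exact absurd hij (by decide)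
        | assumption
  · intro i j hij
    fin_cases i <;> fin_cases j <;>
      first
        | exact absurd hij (by decide)
        | exact iff_of_true (by assumption) (by decide)
        | exact iff_of_false (by assumption) (by decide)

lemma embedS122 {V : Type*} (G : SimpleGraph V) (x0 x1 x2 x3 x4 x5 : V)
    (e01 : G.Adj x0 x1) (e12 : G.Adj x1 x2) (e23 : G.Adj x2 x3)
    (e34 : G.Adj x3 x4) (e25 : G.Adj x2 x5)
    (n02 : ¬G.Adj x0 x2) (n03 : ¬G.Adj x0 x3) (n04 : ¬G.Adj x0 x4) (n05 : ¬G.Adj x0 x5)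
    (n13 : ¬G.Adj x1 x3) (n14 : ¬G.Adj x1 x4) (n15 : ¬G.Adj x1 x5)
    (n24 : ¬G.Adj x2 x4) (n35 : ¬G.Adj x3 x5) (n45 : ¬G.Adj x4 x5) :
    Nonempty (S122 ↪g G) := by
  have ne01 : x0 ≠ x1 := e01.ne
  have ne12 : x1 ≠ x2 := e12.ne
  have ne23 : x2 ≠ x3 := e23.ne
  have ne34 : x3 ≠ x4 := e34.ne
  have ne25 : x2 ≠ x5 := e25.ne
  have ne02 : x0 ≠ x2 := by rintro rfl; exact n05 e25
  have ne03 : x0 ≠ x3 := by rintro rfl; exact n04 e34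
  have ne04 : x0 ≠ x4 := by rintro rfl; exact n03 e34.symm
  have ne05 : x0 ≠ x5 := by rintro rfl; exact n02 e25.symm
  have ne13 : x1 ≠ x3 := by rintro rfl; exact n14 e34
  have ne14 : x1 ≠ x4 := by rintro rfl; exact n13 e34.symm
  have ne15 : x1 ≠ x5 := by rintro rfl; exact n05 e01
  have ne24 : x2 ≠ x4 := by rintro rfl; exact n45 e25
  have ne35 : x3 ≠ x5 := by rintro rfl; exact n45 e34.symm
  have ne45 : x4 ≠ x5 := by rintro rfl; exact n35 e34
  apply embed_six S122
      (fun k : Fin 6 => match k with |0=>x0|1=>x1|2=>x2|3=>x3|4=>x4|5=>x5)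
  · intro i j hij
    fin_cases i <;> fin_cases j <;>
      first
        | exact absurd hij (by decide)
        | assumption
  · intro i j hij
    fin_cases i <;> fin_cases j <;>
      first
        | exact absurd hij (by decide)
        | exact iff_of_true (by assumption) (by decide)
        | exact iff_of_false (by assumption) (by decide)

section Helpers

variable {V : Type*} {G : SimpleGraph V}

lemma adj_dist_le (hG : G.Connected) {v z y : V} (h : G.Adj z y) :
    G.dist v y ≤ G.dist v z + 1 := by
  have h1 : G.dist z y = 1 := SimpleGraph.dist_eq_one_iff_adj.mpr h
  have h2 := hG.dist_triangle (u := v) (v := z) (w := y)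
  omega

lemma not_adj_far (hG : G.Connected) {v z y : V} {m n : ℕ} (hz : G.dist v z = m)
    (hy : G.dist v y = n) (hmn : m + 2 ≤ n) : ¬ G.Adj z y := by
  intro h
  have := adj_dist_le hG (v := v) h
  omega

lemma dist_zero_eq (hG : G.Connected) {v z : V} (h : G.dist v z = 0) : v = z :=
  ((hG.preconnected v z).dist_eq_zero_iff).mp h

lemma walk3 (hG : G.Connected) {v x : V} (h3 : G.dist v x = 3) :
    ∃ a b : V, G.Adj v a ∧ G.Adj a b ∧ G.Adj b x ∧ G.dist v a = 1 ∧ G.dist v b = 2 := by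
  obtain ⟨p, hp⟩ := (hG.preconnected v x).exists_walk_length_eq_dist
  rw [h3] at hp
  have hva : G.Adj v (p.getVert 1) := by
    have := p.adj_getVert_succ (i := 0) (by omega)
    rwa [p.getVert_zero] at this
  have hab : G.Adj (p.getVert 1) (p.getVert 2) := p.adj_getVert_succ (by omega)
  have hbx : G.Adj (p.getVert 2) x := by
    have := p.adj_getVert_succ (i := 2) (by omega)
    have h4 : p.getVert 3 = x := by rw [← hp]; exact p.getVert_length
    rwa [h4] at this
  have ha1 : G.dist v (p.getVert 1) = 1 := SimpleGraph.dist_eq_one_iff_adj.mpr hva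
  have hb2 : G.dist v (p.getVert 2) = 2 := by
    have hle : G.dist v (p.getVert 2) ≤ 2 := by
      have := adj_dist_le hG (v := v) hab
      omega
    have hge := adj_dist_le hG (v := v) hbx
    omega
  exact ⟨p.getVert 1, p.getVert 2, hva, hab, hbx, ha1, hb2⟩

variable {D : Set V} {v : V}

/-- no vertex of `D` is at distance 1 or 2 from `v`. -/
lemma D_far (hG : G.Connected) (hD : IsEffDomSet G D) (hv : v ∈ D) :
    ∀ d ∈ D, G.dist v d ≠ 1 ∧ G.dist v d ≠ 2 := by
  intro d hd
  constructor
  · intro h1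
    have hadj : G.Adj v d := SimpleGraph.dist_eq_one_iff_adj.mp h1
    obtain ⟨c, _, hc⟩ := hD v
    have e1 := hc v ⟨hv, Or.inl rfl⟩
    have e2 := hc d ⟨hd, Or.inr hadj.symm⟩
    have : v = d := e1.trans e2.symm
    rw [this, SimpleGraph.dist_self] at h1
    omega
  · intro h2
    obtain ⟨p, hp⟩ := (hG.preconnected v d).exists_walk_length_eq_dist
    rw [h2] at hp
    have hvm : G.Adj v (p.getVert 1) := by
      have := p.adj_getVert_succ (i := 0) (by omega)
      rwa [p.getVert_zero] at this
    have hmd : G.Adj (p.getVert 1) d := by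
      have := p.adj_getVert_succ (i := 1) (by omega)
      have h4 : p.getVert 2 = d := by rw [← hp]; exact p.getVert_length
      rwa [h4] at this
    obtain ⟨c, _, hc⟩ := hD (p.getVert 1)
    have e1 := hc v ⟨hv, Or.inr hvm⟩
    have e2 := hc d ⟨hd, Or.inr hmd.symm⟩
    have : v = d := e1.trans e2.symm
    rw [this, SimpleGraph.dist_self] at h2
    omega

/-- the dominator of a vertex at distance 2 is adjacent to it and at distance 3. -/
lemma dom_N2 (hG : G.Connected) (hD : IsEffDomSet G D) (hv : v ∈ D)
    {b : V} (hb : G.dist v b = 2) :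
    ∃ d, d ∈ D ∧ G.Adj d b ∧ G.dist v d = 3 := by
  obtain ⟨d, ⟨hdD, hdb⟩, _⟩ := hD b
  rcases hdb with rfl | hdb
  · exact absurd hb (D_far hG hD hv d hdD).2
  · refine ⟨d, hdD, hdb, ?_⟩
    have hle : G.dist v d ≤ 3 := by
      have := adj_dist_le hG (v := v) hdb.symm
      omega
    have h0 : G.dist v d ≠ 0 := by
      intro h
      have hvd := dist_zero_eq hG h
      rw [← hvd] at hdb
      rw [SimpleGraph.dist_eq_one_iff_adj.mpr hdb] at hb
      omega
    obtain ⟨h1', h2'⟩ := D_far hG hD hv d hdD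
    omega

/-- Key Lemma: the dominator of a vertex at distance 3 is at distance 3 too. -/
lemma KL (hG : G.Connected) (hSfree : IsEmpty (S122 ↪g G))
    (hD : IsEffDomSet G D) (hv : v ∈ D) {x : V} (h3 : G.dist v x = 3) :
    ∃ d, d ∈ D ∧ G.dist v d = 3 ∧ (d = x ∨ G.Adj d x) ∧
      (∀ y, y ∈ D → (y = x ∨ G.Adj y x) → y = d) := by
  obtain ⟨d, ⟨hdD, hdx⟩, hud⟩ := hD x
  refine ⟨d, hdD, ?_, hdx, fun y hy1 hy2 => hud y ⟨hy1, hy2⟩⟩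
  rcases hdx with rfl | hdx
  · exact h3
  · have hle : G.dist v d ≤ 4 := by
      have := adj_dist_le hG (v := v) hdx.symm
      omega
    have h0 : G.dist v d ≠ 0 := by
      intro h
      have hvd := dist_zero_eq hG h
      rw [← hvd] at hdx
      rw [SimpleGraph.dist_eq_one_iff_adj.mpr hdx] at h3
      omega
    obtain ⟨h1', h2'⟩ := D_far hG hD hv d hdD
    have h4 : G.dist v d = 3 ∨ G.dist v d = 4 := by omega
    rcases h4 with h4 | h4
    · exact h4
    · exfalso
      obtain ⟨a, b, hva, hab, hbx, ha1, hb2⟩ := walk3 hG h3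
      obtain ⟨db, hdbD, hdbb, hdb3⟩ := dom_N2 hG hD hv hb2
      have hnxdb : ¬ G.Adj x db := by
        intro h
        have := hud db ⟨hdbD, Or.inr h.symm⟩
        rw [this] at hdb3
        omega
      have hnddb : ¬ G.Adj d db := by
        intro h
        obtain ⟨c, _, hc⟩ := hD db
        have e1 := hc db ⟨hdbD, Or.inl rfl⟩
        have e2 := hc d ⟨hdD, Or.inr h⟩
        rw [e2.trans e1.symm] at h4
        omega
      have hd0 : G.dist v v = 0 := SimpleGraph.dist_self
      obtain ⟨emb⟩ := embedS122 G v a b x d db hva hab hbx hdx.symm hdbb.symm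
        (not_adj_far hG hd0 hb2 (by omega))
        (not_adj_far hG hd0 h3 (by omega))
        (not_adj_far hG hd0 h4 (by omega))
        (not_adj_far hG hd0 hdb3 (by omega))
        (not_adj_far hG ha1 h3 (by omega))
        (not_adj_far hG ha1 h4 (by omega))
        (not_adj_far hG ha1 hdb3 (by omega))
        (not_adj_far hG hb2 h4 (by omega))
        hnxdb
        hnddb
      exact hSfree.false emb

/-- Claim C: closure of the neighborhood of an `N3`-dominator. -/
lemma claimC (hG : G.Connected)
    (hP6free : IsEmpty (SimpleGraph.pathGraph 6 ↪g G))
    (hSfree : IsEmpty (S122 ↪g G))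
    (hD : IsEffDomSet G D) (hv : v ∈ D) {d q w : V}
    (hdD : d ∈ D) (hd3 : G.dist v d = 3) (hq3 : G.dist v q = 3) (hw3 : G.dist v w = 3)
    (hdq : G.Adj d q) (hqw : G.Adj q w) (hwd : w ≠ d) : G.Adj d w := by
  by_contra hndw
  -- q's dominator is d
  obtain ⟨cq, _, hcq⟩ := hD q
  have hdcq : d = cq := hcq d ⟨hdD, Or.inr hdq⟩
  -- w's dominator d'
  obtain ⟨d', hd'D, hd'3, hd'w, huw⟩ := KL hG hSfree hD hv hw3
  rcases hd'w with rfl | hd'w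
  · -- w ∈ D; then d and w both dominate q
    have e2 := hcq d' ⟨hd'D, Or.inr hqw.symm⟩
    exact hwd (e2.trans hdcq.symm)
  · by_cases hd'd : d' = d
    · exact hndw (hd'd ▸ hd'w)
    · -- the main configuration
      have hnd'q : ¬ G.Adj d' q := by
        intro h
        exact hd'd ((hcq d' ⟨hd'D, Or.inr h⟩).trans hdcq.symm)
      have hndd' : ¬ G.Adj d d' := by
        intro h
        obtain ⟨c, _, hc⟩ := hD d'
        have e1 := hc d' ⟨hd'D, Or.inl rfl⟩
        have e2 := hc d ⟨hdD, Or.inr h⟩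
        exact hd'd (e1.trans e2.symm)
      obtain ⟨a, b, hva, hab, hbd, ha1, hb2⟩ := walk3 hG hd3
      have hnbd' : ¬ G.Adj b d' := by
        intro h
        obtain ⟨c, _, hc⟩ := hD b
        have e1 := hc d ⟨hdD, Or.inr hbd.symm⟩
        have e2 := hc d' ⟨hd'D, Or.inr h.symm⟩
        exact hd'd (e2.trans e1.symm)
      have hd0 : G.dist v v = 0 := SimpleGraph.dist_self
      have nvb : ¬ G.Adj v b := not_adj_far hG hd0 hb2 (by omega)
      have nvd : ¬ G.Adj v d := not_adj_far hG hd0 hd3 (by omega)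
      have nvq : ¬ G.Adj v q := not_adj_far hG hd0 hq3 (by omega)
      have nvw : ¬ G.Adj v w := not_adj_far hG hd0 hw3 (by omega)
      have nvd' : ¬ G.Adj v d' := not_adj_far hG hd0 hd'3 (by omega)
      have nad : ¬ G.Adj a d := not_adj_far hG ha1 hd3 (by omega)
      have naq : ¬ G.Adj a q := not_adj_far hG ha1 hq3 (by omega)
      have naw : ¬ G.Adj a w := not_adj_far hG ha1 hw3 (by omega)
      have nad' : ¬ G.Adj a d' := not_adj_far hG ha1 hd'3 (by omega)
      by_cases hbw : G.Adj b w
      · -- S122 on v a b w d' d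
        obtain ⟨emb⟩ := embedS122 G v a b w d' d hva hab hbw hd'w.symm hbd
          nvb nvw nvd' nvd naw nad' nad hnbd'
          (fun h => hndw h.symm) (fun h => hndd' h.symm)
        exact hSfree.false emb
      · by_cases hbq : G.Adj b q
        · -- P6 on v a b q w d'
          obtain ⟨emb⟩ := embedP6 G v a b q w d' hva hab hbq hqw hd'w.symm
            nvb nvq nvw nvd' naq naw nad' hbw hnbd' (fun h => hnd'q h.symm)
          exact hP6free.false emb
        · -- P6 on v a b d q w
          obtain ⟨emb⟩ := embedP6 G v a b d q w hva hab hbd hdq hqw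
            nvb nvd nvq nvw nad naq naw hbq hbw hndw
          exact hP6free.false emb

end Helpers

theorem stmt13 {V : Type*} [Fintype V] (G : SimpleGraph V) (hG : G.Connected)
    (hP6free : IsEmpty (SimpleGraph.pathGraph 6 ↪g G))
    (hSfree : IsEmpty (S122 ↪g G))
    (D : Set V) (hD : IsEffDomSet G D) (v : V) (hv : v ∈ D)
    (N3 : Set V) (hN3 : N3 = {w | G.dist v w = 3}) :
    (∀ d₁ ∈ D, ∀ d₂ ∈ D, d₂ ∈ compOf G N3 d₁ → d₁ = d₂) ∧
    (∀ u ∈ N3, ∃ z ∈ compOf G N3 u, ∀ w ∈ compOf G N3 u, w ≠ z → G.Adj z w) := by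
  have hmem : ∀ x : V, x ∈ N3 → G.dist v x = 3 := by
    intro x hx
    rw [hN3] at hx
    exact hx
  -- universality of an N3-dominator along walks
  have lemU : ∀ (d : V), d ∈ D → G.dist v d = 3 →
      ∀ (y w : {x // x ∈ N3}) (_ : (G.induce N3).Walk y w),
        (y.1 = d ∨ G.Adj d y.1) → (w.1 = d ∨ G.Adj d w.1) := by
    intro d hdD hd3 y w p
    induction p with
    | nil => exact id
    | @cons y' z' w' h p ih =>
      intro hy
      apply ih
      have hadj : G.Adj y'.1 z'.1 := by
        simpa using h
      rcases hy with hy | hy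
      · right; rwa [hy] at hadj
      · by_cases hz : z'.1 = d
        · left; exact hz
        · right
          exact claimC hG hP6free hSfree hD hv hdD hd3
            (hmem _ y'.2) (hmem _ z'.2) hy hadj hz
  constructor
  · intro d1 hd1 d2 hd2 hcomp
    obtain ⟨h1N, h2N, hreach⟩ := hcomp
    obtain ⟨p⟩ := hreach
    have := lemU d1 hd1 (hmem _ h1N) ⟨d1, h1N⟩ ⟨d2, h2N⟩ p (Or.inl rfl)
    rcases this with h | h
    · exact h.symm
    · obtain ⟨c, _, hc⟩ := hD d2
      have e1 := hc d1 ⟨hd1, Or.inr h⟩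
      have e2 := hc d2 ⟨hd2, Or.inl rfl⟩
      exact e1.trans e2.symm
  · intro u hu
    have hu3 : G.dist v u = 3 := hmem u hu
    obtain ⟨d, hdD, hd3, hdu, _⟩ := KL hG hSfree hD hv hu3
    have hdN : d ∈ N3 := by rw [hN3]; exact hd3
    have hreach_ud : (G.induce N3).Reachable ⟨u, hu⟩ ⟨d, hdN⟩ := by
      rcases hdu with rfl | hdu
      · exact SimpleGraph.Reachable.refl _
      · apply SimpleGraph.Adj.reachable
        simp only [SimpleGraph.comap_adj, Function.Embedding.coe_subtype]
        exact hdu.symm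
    refine ⟨d, ⟨hu, hdN, hreach_ud⟩, ?_⟩
    intro w hw hwd
    obtain ⟨_, hwN, hreach_uw⟩ := hw
    have hreach_dw := hreach_ud.symm.trans hreach_uw
    obtain ⟨p⟩ := hreach_dw
    have := lemU d hdD hd3 ⟨d, hdN⟩ ⟨w, hwN⟩ p (Or.inl rfl)
    rcases this with h | h
    · exact absurd h hwd
    · exact h
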